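/- Let q_1 < q_2 < ⋯ < q_t be distinct odd primes and set m = 2 q_1 ⋯ q_t. For a positive integer n, let s_m^*(n) denote the number of ordered pairs (r̄, s̄) of units of ℤ/mℤ with r̄ + s̄ = n̄. Then for every positive integer n, with d = gcd(2n, m), one has s_m^*(2n) = 𝒮(d) · s_m^*(2) (equality of rational numbers). -/

import Mathlib

open Finset

noncomputable def cnt (m k : ℕ) : ℕ :=
  Nat.card {x : (ZMod m)ˣ × (ZMod m)ˣ //
    ((x.1 : ZMod m) + (x.2 : ZMod m) = (k : ZMod m))}

lemma cnt_mul (a b : ℕ) (h : a.Coprime b) (k : ℕ) :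
    cnt (a*b) k = cnt a k * cnt b k := by
  let e := ZMod.chineseRemainder h
  let F : (ZMod (a*b))ˣ ≃ (ZMod a)ˣ × (ZMod b)ˣ :=
    (Units.mapEquiv e.toMulEquiv).toEquiv.trans MulEquiv.prodUnits.toEquiv
  have hF : ∀ x : (ZMod (a*b))ˣ,
      (((F x).1 : ZMod a), ((F x).2 : ZMod b)) = e (x : ZMod (a*b)) := fun _ => rfl
  unfold cnt
  rw [← Nat.card_prod]
  apply Nat.card_congr
  refine (Equiv.subtypeEquiv ((F.prodCongr F).trans (Equiv.prodProdProdComm _ _ _ _)) ?_).trans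
    (Equiv.subtypeProdEquivProd)
  intro x
  have key : ((x.1 : ZMod (a*b)) + x.2 = (k : ZMod (a*b))) ↔
      e ((x.1 : ZMod (a*b)) + x.2) = e (k : ZMod (a*b)) := (e.injective.eq_iff).symm
  rw [key, map_add, map_natCast, ← hF x.1, ← hF x.2]
  simp only [Equiv.trans_apply, Equiv.prodCongr_apply, Equiv.prodProdProdComm_apply,
    Prod.map_apply, Prod.mk_add_mk, Prod.ext_iff]
  constructor <;> exact fun ⟨h1, h2⟩ => ⟨h1, h2⟩

lemma cnt_prime (p : ℕ) (hp : p.Prime) (k : ℕ) :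
    cnt p k = if p ∣ k then p - 1 else p - 2 := by
  haveI : Fact p.Prime := ⟨hp⟩
  set z : ZMod p := (k : ZMod p) with hz
  let E : {x : (ZMod p)ˣ × (ZMod p)ˣ // ((x.1 : ZMod p) + (x.2 : ZMod p) = z)} ≃
      {r : ZMod p // r ≠ 0 ∧ r ≠ z} :=
  { toFun := fun x => ⟨(x.1.1 : ZMod p), x.1.1.ne_zero, by
      intro hrz
      have hx2 : (x.1.2 : ZMod p) = 0 := by
        have h2 := x.2
        rw [hrz] at h2
        linear_combination h2
      exact x.1.2.ne_zero hx2⟩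
    invFun := fun r => ⟨(Units.mk0 r.1 r.2.1, Units.mk0 (z - r.1) (sub_ne_zero.mpr (Ne.symm r.2.2))),
      by simp⟩
    left_inv := fun x => by
      apply Subtype.ext
      apply Prod.ext
      · apply Units.ext; simp
      · apply Units.ext
        simp only [Units.val_mk0]
        have h2 := x.2
        linear_combination -h2
    right_inv := fun r => rfl }
  unfold cnt
  rw [Nat.card_congr E, Nat.card_eq_fintype_card, Fintype.card_subtype]
  have hfilt : Finset.univ.filter (fun r : ZMod p => r ≠ 0 ∧ r ≠ z) =
      Finset.univ \ {0, z} := by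
    ext r; simp [not_or]
  rw [hfilt, Finset.card_sdiff_of_subset (Finset.subset_univ _), Finset.card_univ, ZMod.card]
  have hdvd : p ∣ k ↔ z = 0 := (ZMod.natCast_eq_zero_iff k p).symm
  by_cases hc : p ∣ k
  · rw [if_pos hc]
    rw [hdvd] at hc
    rw [hc]
    simp
  · rw [if_neg hc]
    have hz0 : z ≠ 0 := fun h0 => hc (hdvd.mpr h0)
    rw [Finset.card_pair (Ne.symm hz0)]

lemma cnt_prod (S : Finset ℕ) (hS : ∀ q ∈ S, q.Prime) (k : ℕ) :
    cnt (∏ q ∈ S, q) k = ∏ q ∈ S, cnt q k := by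
  induction S using Finset.induction_on with
  | empty =>
    simp only [Finset.prod_empty]
    unfold cnt
    rw [Nat.card_eq_one_iff_unique]
    exact ⟨⟨fun x y => Subtype.ext (Subsingleton.elim _ _)⟩,
      ⟨⟨(1, 1), Subsingleton.elim _ _⟩⟩⟩
  | @insert a S' ha ih =>
    have hap : a.Prime := hS a (mem_insert_self a S')
    have hcop : a.Coprime (∏ q ∈ S', q) := by
      apply Nat.Coprime.prod_right
      intro q hq
      exact (Nat.coprime_primes hap (hS q (mem_insert_of_mem hq))).mpr
        (fun h => ha (h ▸ hq))
    rw [Finset.prod_insert ha, cnt_mul a _ hcop, ih (fun q hq => hS q (mem_insert_of_mem hq)),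
      Finset.prod_insert ha]

/-- The Sylvester factor `𝒮 n = ∏_{p ∣ n, p odd prime} (p-1)/(p-2)`. -/
noncomputable def sylvester (n : ℕ) : ℚ :=
  ∏ p ∈ n.primeFactors.erase 2, ((p : ℚ) - 1) / ((p : ℚ) - 2)

theorem sylvester_stmt19
    (Q : Finset ℕ) (hQ : ∀ q ∈ Q, q.Prime ∧ q ≠ 2)
    (m : ℕ) (hm : m = 2 * ∏ q ∈ Q, q)
    (s : ℕ → ℕ)
    (hs : ∀ n : ℕ, s n =
      Nat.card {x : (ZMod m)ˣ × (ZMod m)ˣ //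
        ((x.1 : ZMod m) + (x.2 : ZMod m) = (n : ZMod m))})
    (n : ℕ) (hn : 1 ≤ n) :
    (s (2 * n) : ℚ) = sylvester (Nat.gcd (2 * n) m) * (s 2 : ℚ) := by
  classical
  have h2Q : 2 ∉ Q := fun h => (hQ 2 h).2 rfl
  have hSprime : ∀ q ∈ insert 2 Q, q.Prime := by
    intro q hq
    rcases mem_insert.mp hq with h | h
    · exact h ▸ Nat.prime_two
    · exact (hQ q h).1
  have hm' : m = ∏ q ∈ insert 2 Q, q := by rw [hm, Finset.prod_insert h2Q]
  have hsc : ∀ N : ℕ, s N = cnt m N := fun N => hs N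
  have hQ3 : ∀ q ∈ Q, 3 ≤ q := by
    intro q hq
    have h2 := (hQ q hq).1.two_le
    have hne := (hQ q hq).2
    omega
  have hc2n : cnt m (2 * n) = ∏ q ∈ Q, (if q ∣ 2 * n then q - 1 else q - 2) := by
    rw [hm', cnt_prod _ hSprime, Finset.prod_insert h2Q, cnt_prime 2 Nat.prime_two,
      if_pos ⟨n, rfl⟩, show (2 : ℕ) - 1 = 1 from rfl, one_mul]
    exact Finset.prod_congr rfl fun q hq => cnt_prime q (hQ q hq).1 (2 * n)
  have hc2 : cnt m 2 = ∏ q ∈ Q, (q - 2) := by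
    rw [hm', cnt_prod _ hSprime, Finset.prod_insert h2Q, cnt_prime 2 Nat.prime_two,
      if_pos dvd_rfl, show (2 : ℕ) - 1 = 1 from rfl, one_mul]
    refine Finset.prod_congr rfl fun q hq => ?_
    rw [cnt_prime q (hQ q hq).1 2, if_neg]
    intro hd
    exact (hQ q hq).2 ((Nat.prime_dvd_prime_iff_eq (hQ q hq).1 Nat.prime_two).mp hd)
  have hmne : m ≠ 0 := by
    rw [hm']
    exact (Finset.prod_pos fun q hq => (hSprime q hq).pos).ne'
  have h2n0 : 2 * n ≠ 0 := by omega
  have hpf : ((2 * n).gcd m).primeFactors.erase 2 = Q.filter (· ∣ 2 * n) := by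
    rw [Nat.primeFactors_gcd h2n0 hmne, hm', Nat.primeFactors_prod hSprime]
    ext q
    simp only [mem_erase, mem_inter, Nat.mem_primeFactors, mem_insert, mem_filter]
    constructor
    · rintro ⟨hne2, ⟨_, hdvd, _⟩, (h2 | hQq)⟩
      · exact absurd h2 hne2
      · exact ⟨hQq, hdvd⟩
    · rintro ⟨hQq, hdvd⟩
      exact ⟨(hQ q hQq).2, ⟨(hQ q hQq).1, hdvd, h2n0⟩, Or.inr hQq⟩
  rw [hsc, hsc, hc2n, hc2, sylvester, hpf, Nat.cast_prod, Nat.cast_prod]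
  have hL : (∏ q ∈ Q, ((if q ∣ 2 * n then q - 1 else q - 2 : ℕ) : ℚ)) =
      ∏ q ∈ Q, (if q ∣ 2 * n then (q : ℚ) - 1 else (q : ℚ) - 2) := by
    refine Finset.prod_congr rfl fun q hq => ?_
    have h3 := hQ3 q hq
    split_ifs
    · rw [Nat.cast_sub (by omega)]; norm_num
    · rw [Nat.cast_sub (by omega)]; norm_num
  have hR : (∏ q ∈ Q, ((q - 2 : ℕ) : ℚ)) = ∏ q ∈ Q, ((q : ℚ) - 2) := by
    refine Finset.prod_congr rfl fun q hq => ?_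
    have h3 := hQ3 q hq
    rw [Nat.cast_sub (by omega)]; norm_num
  rw [hL, hR, Finset.prod_ite,
    ← Finset.prod_filter_mul_prod_filter_not Q (· ∣ 2 * n) (fun q => (q : ℚ) - 2),
    ← mul_assoc, ← Finset.prod_mul_distrib]
  congr 1
  refine Finset.prod_congr rfl fun q hq => ?_
  have h3 := hQ3 q (mem_filter.mp hq).1
  have hne : (q : ℚ) - 2 ≠ 0 := by
    have : (3 : ℚ) ≤ (q : ℚ) := by exact_mod_cast h3
    linarith
  field_simp
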